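/- Let ν ∈ M(ℝ) with ‖ν‖ < ∞, t > 0, and define the measure μ_V on B_p by ∫ f dμ_V = ∫_0^t ∫_ℝ e^{ixy} f(y·v_s) dν(y) ds for bounded continuous f, where v_s ∈ B_p is the evaluation representer at s. Then ‖μ_V‖_{M(B_p)} ≤ t‖ν‖_{M(ℝ)}, and the map η ↦ ∫_0^t V(x+η(s)) ds on B_q, where V is the Fourier transform of ν, equals the Fourier transform of μ_V. -/

import Mathlib

open MeasureTheory Complex

/-- let `ν ∈ M(ℝ)` (represented by an integrable density `ρ` w.r.t. a finite
measure `P`, with `‖ν‖ = ∫‖ρ‖dP`), `t > 0`, `x ∈ ℝ`, and define the measure `μ_V` on `B_p` by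
`∫ f dμ_V = ∫_0^t ∫_ℝ e^{ixy} f(y·v_s) dν(y) ds`, where `v_s(τ) = min(t-s,t-τ)` is the
evaluation representer (with derivative `-χ_{(s,t]}`).  Then `‖μ_V‖ ≤ t‖ν‖` (stated by
testing against continuous functions `f` bounded by `1` on the path space), and the map
`η ↦ ∫_0^t V(x+η(s)) ds` on `B_q` (with `V = ν̂`, and `η(s) = -∫_s^t η'`) is the Fourier
transform of `μ_V` (the pairing `⟨η, y·v_s⟩ = ∫_0^t η'(τ)·y·v_s'(τ) dτ`). -/
theorem stmt_16 (p q t x : ℝ) (hp : 1 < p) (hpq : 1 / p + 1 / q = 1) (ht : 0 < t)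
    (P : Measure ℝ) [IsFiniteMeasure P] (ρ : ℝ → ℂ) (hρ : Integrable ρ P) :
    -- total variation bound ‖μ_V‖ ≤ t ‖ν‖
    (∀ f : (ℝ → ℝ) → ℂ, Continuous f → (∀ γ : ℝ → ℝ, ‖f γ‖ ≤ 1) →
      ‖∫ s in Set.Ioc (0:ℝ) t, ∫ y, Complex.exp (I * x * y) *
          f (fun τ => y * min (t - s) (t - τ)) * ρ y ∂P‖ ≤ t * ∫ y, ‖ρ y‖ ∂P) ∧
    -- the Fourier transform of μ_V is η ↦ ∫_0^t V(x + η(s)) ds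
    (∀ w : ℝ → ℝ, MemLp w (ENNReal.ofReal q) (volume.restrict (Set.Icc 0 t)) →
      (∫ s in Set.Ioc (0:ℝ) t, ∫ y, Complex.exp (I * x * y) *
          Complex.exp (I * ((∫ τ in Set.Ioc (0:ℝ) t,
            w τ * (y * (-(Set.Ioc s t).indicator (fun _ => (1:ℝ)) τ))) : ℝ)) * ρ y ∂P) =
        ∫ s in Set.Ioc (0:ℝ) t,
          ∫ y, Complex.exp (I * ((x + -∫ u in Set.Ioc s t, w u : ℝ)) * y) * ρ y ∂P) := by
  constructor
  · intro f hf hf1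
    have hC : ∀ s : ℝ, s ∈ Set.Ioc (0:ℝ) t →
        ‖∫ y, Complex.exp (I * x * y) * f (fun τ => y * min (t - s) (t - τ)) * ρ y ∂P‖
          ≤ ∫ y, ‖ρ y‖ ∂P := by
      intro s _
      calc ‖∫ y, Complex.exp (I * x * y) * f (fun τ => y * min (t - s) (t - τ)) * ρ y ∂P‖
          ≤ ∫ y, ‖Complex.exp (I * x * y) * f (fun τ => y * min (t - s) (t - τ)) * ρ y‖ ∂P :=
            norm_integral_le_integral_norm _
        _ ≤ ∫ y, ‖ρ y‖ ∂P := by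
            refine integral_mono_of_nonneg (Filter.Eventually.of_forall fun y => norm_nonneg _)
              hρ.norm (Filter.Eventually.of_forall fun y => ?_)
            dsimp only
            rw [norm_mul, norm_mul]
            have h1 : ‖Complex.exp (I * x * y)‖ = 1 := by
              have : (I * (x:ℂ) * (y:ℂ)) = ((x * y : ℝ) : ℂ) * I := by push_cast; ring
              rw [this, Complex.norm_exp_ofReal_mul_I]
            rw [h1, one_mul]
            calc ‖f _‖ * ‖ρ y‖ ≤ 1 * ‖ρ y‖ :=
                  mul_le_mul_of_nonneg_right (hf1 _) (norm_nonneg _)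
              _ = ‖ρ y‖ := one_mul _
    have hg : Continuous (fun sy : ℝ × ℝ => Complex.exp (I * x * sy.2) *
        f (fun τ => sy.2 * min (t - sy.1) (t - τ))) := by
      refine Continuous.mul ?_ (hf.comp (continuous_pi fun τ => ?_))
      · exact Complex.continuous_exp.comp
          ((continuous_const.mul continuous_const).mul
            (Complex.continuous_ofReal.comp continuous_snd))
      · exact continuous_snd.mul
          (((continuous_const.sub continuous_fst)).min continuous_const)
    have hmes : AEStronglyMeasurable
        (fun sy : ℝ × ℝ => Complex.exp (I * x * sy.2) *
          f (fun τ => sy.2 * min (t - sy.1) (t - τ)) * ρ sy.2)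
        ((volume.restrict (Set.Ioc (0:ℝ) t)).prod P) :=
      hg.aestronglyMeasurable.mul (hρ.1.comp_snd)
    have hbound := norm_setIntegral_le_of_norm_le_const (μ := volume)
      (s := Set.Ioc (0:ℝ) t) (C := ∫ y, ‖ρ y‖ ∂P)
      (by simp [Real.volume_Ioc]) hC
    have hvol : (volume (Set.Ioc (0:ℝ) t)).toReal = t := by
      simp [Real.volume_Ioc, ht.le]
    rw [measureReal_def, hvol] at hbound
    exact hbound.trans_eq (mul_comm _ _)
  · intro w hw
    refine setIntegral_congr_fun measurableSet_Ioc fun s hs => ?_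
    refine integral_congr_ae (Filter.Eventually.of_forall fun y => ?_)
    have hind : (fun τ => w τ * (y * -(Set.Ioc s t).indicator (fun _ => (1:ℝ)) τ))
        = (Set.Ioc s t).indicator (fun τ => w τ * -y) := by
      funext τ
      by_cases h : τ ∈ Set.Ioc s t
      · simp [Set.indicator_of_mem h]
      · simp [Set.indicator_of_notMem h]
    have hsub : Set.Ioc (0:ℝ) t ∩ Set.Ioc s t = Set.Ioc s t :=
      Set.inter_eq_right.mpr (Set.Ioc_subset_Ioc hs.1.le le_rfl)
    have hint : (∫ τ in Set.Ioc (0:ℝ) t,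
        w τ * (y * -(Set.Ioc s t).indicator (fun _ => (1:ℝ)) τ))
        = (∫ u in Set.Ioc s t, w u) * -y := by
      rw [hind, setIntegral_indicator measurableSet_Ioc, hsub, integral_mul_const]
    dsimp only
    rw [hint, ← Complex.exp_add]
    congr 1
    push_cast
    ring
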